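/- Every matrix in SL(2,R) over a commutative ring R that can be written as a product of four elementary transvections t12(*)·t21(*)·t12(*)·t21(*) lies in E(2,R); conversely, if R has stable rank 1, then every g ∈ SL(2,R) is such a product, hence SL(2,R) = E(2,R). -/

import Mathlib

open Matrix

private lemma sl2_decomp_aux {R : Type*} [CommRing R]
    (hsr : ∀ x y : R, (∃ a b : R, a * x + b * y = 1) → ∃ z : R, IsUnit (x + y * z))
    (g : Matrix.SpecialLinearGroup (Fin 2) R) :
    ∃ a b c d : R, (g : Matrix (Fin 2) (Fin 2) R) =
      !![1, a; 0, 1] * !![1, 0; b, 1] * !![1, c; 0, 1] * !![1, 0; d, 1] := by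
  obtain ⟨a, b, c, d, hg⟩ : ∃ a b c d : R, (g : Matrix (Fin 2) (Fin 2) R) = !![a, b; c, d] :=
    ⟨_, _, _, _, Matrix.eta_fin_two _⟩
  have hdet : a * d - b * c = 1 := by
    have h2 := g.2
    rw [hg, Matrix.det_fin_two_of] at h2
    exact h2
  obtain ⟨z, hz⟩ := hsr c d ⟨-b, a, by linear_combination hdet⟩
  obtain ⟨u, hu⟩ := hz
  have hi : (↑u⁻¹ : R) * ↑u = 1 := u.inv_mul
  refine ⟨(a + b*z) * ↑u⁻¹, (1-d)*↑u, -↑u⁻¹, ↑u - z, ?_⟩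
  rw [hg]
  ext i j
  fin_cases i <;> fin_cases j <;>
    simp [Matrix.mul_apply, Fin.sum_univ_succ]
  · linear_combination (↑u⁻¹ * z) * hdet + (↑u⁻¹ * a - (a + b*z) * ↑u⁻¹) * hu +
      ((1 - a) - (a + b*z) * ↑u⁻¹ * (d - 1) * (↑u - z)) * hi
  · linear_combination (-↑u⁻¹ : R) * hdet + (↑u⁻¹ * b) * hu +
      (-b - (a + b*z) * ↑u⁻¹ * (d - 1)) * hi
  · linear_combination -hu

private def sl2_e12 {R : Type*} [CommRing R] (ξ : R) : Matrix.SpecialLinearGroup (Fin 2) R :=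
  ⟨!![1, ξ; 0, 1], by simp [Matrix.det_fin_two_of]⟩

private def sl2_e21 {R : Type*} [CommRing R] (ξ : R) : Matrix.SpecialLinearGroup (Fin 2) R :=
  ⟨!![1, 0; ξ, 1], by simp [Matrix.det_fin_two_of]⟩

/-- A product of four elementary transvections lies in `E(2,R)`;
conversely, over a ring of stable rank 1 every `g ∈ SL(2,R)` is such a product,
hence `SL(2,R) = E(2,R)`. -/
theorem sl2_eq_e2_of_stableRankOne (R : Type*) [CommRing R]
    (S : Set (Matrix.SpecialLinearGroup (Fin 2) R))
    (hS : S = {g : Matrix.SpecialLinearGroup (Fin 2) R | ∃ ξ : R, (g : Matrix (Fin 2) (Fin 2) R) = !![1, ξ; 0, 1] ∨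
      (g : Matrix (Fin 2) (Fin 2) R) = !![1, 0; ξ, 1]}) :
    (∀ g : Matrix.SpecialLinearGroup (Fin 2) R,
      (∃ a b c d : R, (g : Matrix (Fin 2) (Fin 2) R) =
        !![1, a; 0, 1] * !![1, 0; b, 1] * !![1, c; 0, 1] * !![1, 0; d, 1]) →
      g ∈ Subgroup.closure S) ∧
    ((∀ x y : R, (∃ a b : R, a * x + b * y = 1) → ∃ z : R, IsUnit (x + y * z)) →
      (∀ g : Matrix.SpecialLinearGroup (Fin 2) R,
        ∃ a b c d : R, (g : Matrix (Fin 2) (Fin 2) R) =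
          !![1, a; 0, 1] * !![1, 0; b, 1] * !![1, c; 0, 1] * !![1, 0; d, 1]) ∧
      Subgroup.closure S = ⊤) := by
  have h12 : ∀ ξ : R, sl2_e12 ξ ∈ Subgroup.closure S := fun ξ =>
    Subgroup.subset_closure (by rw [hS]; exact ⟨ξ, Or.inl rfl⟩)
  have h21 : ∀ ξ : R, sl2_e21 ξ ∈ Subgroup.closure S := fun ξ =>
    Subgroup.subset_closure (by rw [hS]; exact ⟨ξ, Or.inr rfl⟩)
  have key : ∀ g : Matrix.SpecialLinearGroup (Fin 2) R,
      (∃ a b c d : R, (g : Matrix (Fin 2) (Fin 2) R) =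
        !![1, a; 0, 1] * !![1, 0; b, 1] * !![1, c; 0, 1] * !![1, 0; d, 1]) →
      g ∈ Subgroup.closure S := by
    rintro g ⟨a, b, c, d, hg⟩
    have : g = sl2_e12 a * sl2_e21 b * sl2_e12 c * sl2_e21 d := by
      apply Subtype.ext
      rw [hg]; rfl
    rw [this]
    exact mul_mem (mul_mem (mul_mem (h12 a) (h21 b)) (h12 c)) (h21 d)
  refine ⟨key, fun hsr => ?_⟩
  refine ⟨fun g => sl2_decomp_aux hsr g, ?_⟩
  rw [eq_top_iff]
  intro g _
  exact key g (sl2_decomp_aux hsr g)
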